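/- Fix ξ ∈ [0,1], γ > γ_1, and a real a₁ > 0 with a₁^{2(1−ξ)} > S, and set k₀(γ) := c_1/((1 + γ_1/γ)² + 1). Then for every a ≥ a₁ and every complex ζ with Re ζ > γ, one has ℓ_a(ζ) ≠ 0 and a^{ξ}/|ℓ_a(ζ)| ≤ max( 1/√(2 γ k₀(γ)), 1/(a₁^{2−ξ} − a₁^{ξ} S) ). In particular sup over a ≥ a₁ and Re ζ > γ of a^{ξ}/|ℓ_a(ζ)| is finite. -/

import Mathlib

set_option maxHeartbeats 1000000 in
/-- Fix `ξ ∈ [0,1]`, `γ' > γ 0` and `a₁ > 0` with `a₁^(2(1-ξ)) > S`, and set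
`k₀ = c 0 / ((1 + γ 0 / γ')² + 1)`. Then for every `a ≥ a₁` and every `ζ` with `Re ζ > γ'`
one has `ℓ_a ζ ≠ 0` and
`a^ξ / ‖ℓ_a ζ‖ ≤ max (1/√(2 γ' k₀)) (1/(a₁^(2-ξ) - a₁^ξ S))`; in particular the supremum of
`a^ξ / ‖ℓ_a ζ‖` over `a ≥ a₁` and `Re ζ > γ'` is finite.
(Sequences are indexed by `ℕ`, so `c 0, γ 0` correspond to `c_1, γ_1`.) -/
theorem stmt_5
    (c γs : ℕ → ℝ)
    (hc : ∀ j, 0 < c j)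
    (hγ0 : 0 < γs 0)
    (hγmono : StrictMono γs)
    (hγtop : Filter.Tendsto γs Filter.atTop Filter.atTop)
    (hSsum : Summable fun j => c j / γs j)
    (hS : (∑' j, c j / γs j) < 1)
    (ξ : ℝ) (hξ : ξ ∈ Set.Icc (0:ℝ) 1)
    (γ' : ℝ) (hγ' : γs 0 < γ')
    (a₁ : ℝ) (ha₁ : 0 < a₁) (ha₁S : (∑' j, c j / γs j) < a₁ ^ (2 * (1 - ξ)))
    (k₀ : ℝ) (hk₀ : k₀ = c 0 / ((1 + γs 0 / γ') ^ 2 + 1))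
    (ℓ : ℝ → ℂ → ℂ)
    (hℓ : ∀ a ζ, ℓ a ζ = ζ ^ 2 + (a : ℂ) ^ 2
        - ((a ^ (2 * ξ) : ℝ) : ℂ) * ∑' k, (c k : ℂ) / (ζ + (γs k : ℂ))) :
    ∀ a : ℝ, a₁ ≤ a → ∀ ζ : ℂ, γ' < ζ.re →
      ℓ a ζ ≠ 0 ∧
      a ^ ξ / ‖ℓ a ζ‖ ≤ max (1 / Real.sqrt (2 * γ' * k₀))
        (1 / (a₁ ^ (2 - ξ) - a₁ ^ ξ * ∑' j, c j / γs j)) := by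
  obtain ⟨hξ0, hξ1⟩ := hξ
  intro a ha ζ hζ
  obtain ⟨S, hSdef⟩ : ∃ S, (∑' j, c j / γs j) = S := ⟨_, rfl⟩
  rw [hSdef] at hS ha₁S ⊢
  obtain ⟨x, hxdef⟩ : ∃ x, ζ.re = x := ⟨_, rfl⟩
  obtain ⟨y, hydef⟩ : ∃ y, ζ.im = y := ⟨_, rfl⟩
  rw [hxdef] at hζ
  have hγ'pos : 0 < γ' := hγ0.trans hγ'
  have hx : γ' < x := hζ
  have hxpos : 0 < x := hγ'pos.trans hx
  have hγk : ∀ k, γs 0 ≤ γs k := fun k => hγmono.monotone (Nat.zero_le k)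
  have hγkpos : ∀ k, 0 < γs k := fun k => hγ0.trans_le (hγk k)
  have hxγk : ∀ k, 0 < x + γs k := fun k => add_pos hxpos (hγkpos k)
  have hapos : 0 < a := ha₁.trans_le ha
  have ha2ξ : 0 < a ^ (2 * ξ) := Real.rpow_pos_of_pos hapos _
  have haξpos : 0 < a ^ ξ := Real.rpow_pos_of_pos hapos _
  have hS0 : 0 ≤ S := hSdef ▸ tsum_nonneg fun j => div_nonneg (hc j).le (hγkpos j).le
  have hre_le : ∀ k, x + γs k ≤ ‖ζ + (γs k : ℂ)‖ := by
    intro k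
    have h1 : (ζ + (γs k : ℂ)).re = x + γs k := by simp [hxdef]
    rw [← h1]
    exact Complex.re_le_norm _
  have hsum : Summable fun k => (c k : ℂ) / (ζ + (γs k : ℂ)) := by
    apply Summable.of_norm_bounded hSsum
    intro k
    rw [norm_div, Complex.norm_real, Real.norm_of_nonneg (hc k).le]
    exact div_le_div_of_nonneg_left (hc k).le (hγkpos k)
      (le_trans (by linarith [hre_le k, hxpos]) (hre_le k))
  obtain ⟨W, hWdef⟩ : ∃ W, (∑' k, (c k : ℂ) / (ζ + (γs k : ℂ))) = W := ⟨_, rfl⟩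
  obtain ⟨N, hNdef⟩ : ∃ N : ℕ → ℝ, (fun k => (x + γs k) ^ 2 + y ^ 2) = N := ⟨_, rfl⟩
  have hNk : ∀ k, N k = (x + γs k) ^ 2 + y ^ 2 := fun k => (congrFun hNdef k).symm
  have hNpos : ∀ k, 0 < N k := by
    intro k
    rw [hNk k]
    exact add_pos_of_pos_of_nonneg (pow_pos (hxγk k) 2) (sq_nonneg y)
  have hterm_re : ∀ k, ((c k : ℂ) / (ζ + (γs k : ℂ))).re = c k * (x + γs k) / N k := by
    intro k
    rw [Complex.div_re]
    have h1 : (ζ + (γs k : ℂ)).re = x + γs k := by simp [hxdef]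
    have h2 : (ζ + (γs k : ℂ)).im = y := by simp [hydef]
    have h3 : Complex.normSq (ζ + (γs k : ℂ)) = N k := by
      rw [Complex.normSq_apply, h1, h2, hNk k]; ring
    rw [h1, h2, h3]; simp
  have hterm_im : ∀ k, ((c k : ℂ) / (ζ + (γs k : ℂ))).im = -(y * (c k / N k)) := by
    intro k
    rw [Complex.div_im]
    have h1 : (ζ + (γs k : ℂ)).re = x + γs k := by simp [hxdef]
    have h2 : (ζ + (γs k : ℂ)).im = y := by simp [hydef]
    have h3 : Complex.normSq (ζ + (γs k : ℂ)) = N k := by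
      rw [Complex.normSq_apply, h1, h2, hNk k]; ring
    rw [h1, h2, h3]; simp; ring
  have hsum_re : Summable fun k => c k * (x + γs k) / N k := by
    have := (Complex.hasSum_re hsum.hasSum).summable
    simpa [hterm_re] using this
  have hsum_T : Summable fun k => c k / N k := by
    refine Summable.of_nonneg_of_le (fun k => div_nonneg (hc k).le (hNpos k).le)
      (fun k => ?_) (hSsum.mul_left (1 / γs 0))
    rw [one_div, inv_mul_eq_div, div_div]
    apply div_le_div_of_nonneg_left (hc k).le (mul_pos (hγkpos k) hγ0)
    have h1 : γs k * γs 0 ≤ (x + γs k) ^ 2 := by nlinarith [hγk k, hxγk k, hγkpos k, hx, hγ']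
    rw [hNk k]
    nlinarith [sq_nonneg y]
  obtain ⟨T, hTdef⟩ : ∃ T, (∑' k, c k / N k) = T := ⟨_, rfl⟩
  have hT0 : 0 ≤ T := hTdef ▸ tsum_nonneg fun k => div_nonneg (hc k).le (hNpos k).le
  have hTc0 : c 0 / N 0 ≤ T :=
    hTdef ▸ Summable.le_tsum hsum_T 0 fun j _ => div_nonneg (hc j).le (hNpos j).le
  have hWre : W.re = ∑' k, c k * (x + γs k) / N k := by
    rw [← hWdef, Complex.re_tsum hsum]; exact tsum_congr hterm_re
  have hWim : W.im = -(y * T) := by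
    rw [← hWdef, Complex.im_tsum hsum, tsum_congr hterm_im, tsum_neg, tsum_mul_left, hTdef]
  have hWreS : W.re ≤ S := by
    rw [hWre, ← hSdef]
    apply Summable.tsum_le_tsum _ hsum_re hSsum
    intro k
    rw [div_le_div_iff₀ (hNpos k) (hγkpos k), hNk k]
    have h1 : γs k ≤ x + γs k := by linarith [hxpos]
    nlinarith [mul_nonneg (mul_nonneg (hc k).le (hxγk k).le) (sub_nonneg.mpr h1),
      mul_nonneg (hc k).le (sq_nonneg y)]
  have hRel : (ℓ a ζ).re = x ^ 2 - y ^ 2 + a ^ 2 - a ^ (2 * ξ) * W.re := by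
    rw [hℓ, hWdef]
    simp only [Complex.sub_re, Complex.add_re, pow_two, Complex.mul_re,
      Complex.ofReal_re, Complex.ofReal_im, hxdef, hydef]
    ring
  have hIml : (ℓ a ζ).im = y * (2 * x + a ^ (2 * ξ) * T) := by
    rw [hℓ, hWdef]
    simp only [Complex.sub_im, Complex.add_im, pow_two, Complex.mul_im,
      Complex.ofReal_re, Complex.ofReal_im, hxdef, hydef, hWim]
    ring
  by_cases hycase : y ^ 2 ≤ x ^ 2
  · -- Case A : use the real part
    obtain ⟨E, hEdef⟩ : ∃ E, a₁ ^ (2 * (1 - ξ)) - S = E := ⟨_, rfl⟩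
    have hEpos : 0 < E := by rw [← hEdef]; linarith
    have ha2 : a ^ (2 * ξ) * a ^ (2 * (1 - ξ)) = a ^ 2 := by
      rw [← Real.rpow_add hapos, show 2 * ξ + 2 * (1 - ξ) = (2:ℝ) by ring,
        show (2:ℝ) = ((2:ℕ):ℝ) by norm_num, Real.rpow_natCast]
    have haa : a₁ ^ (2 * (1 - ξ)) ≤ a ^ (2 * (1 - ξ)) :=
      Real.rpow_le_rpow ha₁.le ha (by linarith)
    have hre_lb : a ^ (2 * ξ) * E ≤ (ℓ a ζ).re := by
      rw [hRel]
      have h1 : a ^ (2 * ξ) * W.re ≤ a ^ (2 * ξ) * S :=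
        mul_le_mul_of_nonneg_left hWreS ha2ξ.le
      have h2 : a ^ (2 * ξ) * a₁ ^ (2 * (1 - ξ)) ≤ a ^ 2 := by
        rw [← ha2]; exact mul_le_mul_of_nonneg_left haa ha2ξ.le
      rw [← hEdef]; nlinarith
    have hrepos : 0 < (ℓ a ζ).re := lt_of_lt_of_le (mul_pos ha2ξ hEpos) hre_lb
    have hne : ℓ a ζ ≠ 0 := fun h => by rw [h] at hrepos; simp at hrepos
    refine ⟨hne, le_trans ?_ (le_max_right _ _)⟩
    have hnorm_lb : a ^ (2 * ξ) * E ≤ ‖ℓ a ζ‖ := by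
      refine le_trans hre_lb ?_
      exact Complex.re_le_norm _
    have hd : a ^ ξ / ‖ℓ a ζ‖ ≤ a ^ ξ / (a ^ (2 * ξ) * E) :=
      div_le_div_of_nonneg_left haξpos.le (mul_pos ha2ξ hEpos) hnorm_lb
    refine le_trans hd ?_
    have hsplit : a ^ (2 * ξ) = a ^ ξ * a ^ ξ := by
      rw [← Real.rpow_add hapos, show ξ + ξ = 2 * ξ by ring]
    have haξ : a₁ ^ ξ ≤ a ^ ξ := Real.rpow_le_rpow ha₁.le ha hξ0
    have ha₁ξpos : 0 < a₁ ^ ξ := Real.rpow_pos_of_pos ha₁ _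
    have key : a₁ ^ (2 - ξ) - a₁ ^ ξ * S = a₁ ^ ξ * E := by
      rw [← hEdef, mul_sub, ← Real.rpow_add ha₁, show ξ + 2 * (1 - ξ) = 2 - ξ by ring]
    rw [key, hsplit, mul_assoc, div_mul_eq_div_div, div_self haξpos.ne']
    exact one_div_le_one_div_of_le (mul_pos ha₁ξpos hEpos)
      (mul_le_mul_of_nonneg_right haξ hEpos.le)
  · -- Case B : use the imaginary part
    push_neg at hycase
    have hyne : y ≠ 0 := by
      intro h; rw [h] at hycase; nlinarith [sq_nonneg x]
    have hIpos : 0 < 2 * x + a ^ (2 * ξ) * T :=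
      add_pos_of_pos_of_nonneg (by linarith) (mul_nonneg ha2ξ.le hT0)
    have hImne : (ℓ a ζ).im ≠ 0 := by
      rw [hIml]; exact mul_ne_zero hyne hIpos.ne'
    have hne : ℓ a ζ ≠ 0 := fun h => hImne (by rw [h]; simp)
    refine ⟨hne, le_trans ?_ (le_max_left _ _)⟩
    have hq1 : 0 < 1 + γs 0 / γ' := add_pos zero_lt_one (div_pos hγ0 hγ'pos)
    have hqpos : 0 < (1 + γs 0 / γ') ^ 2 + 1 := by positivity
    have hk₀pos : 0 < k₀ := by rw [hk₀]; exact div_pos (hc 0) hqpos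
    have hkey : k₀ ≤ c 0 * y ^ 2 / N 0 := by
      rw [hk₀, div_le_div_iff₀ hqpos (hNpos 0), hNk 0]
      have hxq : x + γs 0 ≤ x * (1 + γs 0 / γ') := by
        rw [mul_add, mul_one, ← mul_div_assoc]
        have h : γs 0 ≤ x * γs 0 / γ' := by
          rw [le_div_iff₀ hγ'pos]; nlinarith
        linarith
      have h1 := mul_le_mul hxq hxq (hxγk 0).le (mul_nonneg hxpos.le hq1.le)
      have h2 : x ^ 2 * (1 + γs 0 / γ') ^ 2 ≤ y ^ 2 * (1 + γs 0 / γ') ^ 2 :=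
        mul_le_mul_of_nonneg_right hycase.le (sq_nonneg _)
      nlinarith [(hc 0).le]
    have h1 : k₀ ≤ T * y ^ 2 := by
      have h := mul_le_mul_of_nonneg_right hTc0 (sq_nonneg y)
      calc k₀ ≤ c 0 * y ^ 2 / N 0 := hkey
        _ = c 0 / N 0 * y ^ 2 := by ring
        _ ≤ T * y ^ 2 := h
    have hsq : (a ^ ξ) ^ 2 = a ^ (2 * ξ) := by
      rw [sq, ← Real.rpow_add hapos, show ξ + ξ = 2 * ξ by ring]
    have hA := mul_le_mul_of_nonneg_left h1 ha2ξ.le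
    have hB : 0 ≤ a ^ (2 * ξ) * k₀ := mul_nonneg ha2ξ.le hk₀pos.le
    have h2 : 2 * γ' * k₀ * (a ^ ξ) ^ 2 ≤ (ℓ a ζ).im ^ 2 := by
      rw [hIml, hsq]
      nlinarith [sq_nonneg (y * (2 * x - a ^ (2 * ξ) * T)),
        mul_le_mul_of_nonneg_left hA (by linarith : (0:ℝ) ≤ 8 * x),
        mul_nonneg (by linarith : (0:ℝ) ≤ x - γ') hB,
        mul_nonneg hγ'pos.le hB]
    have h2γk : (0:ℝ) ≤ 2 * γ' * k₀ := by
      have := mul_nonneg hγ'pos.le hk₀pos.le; linarith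
    have hnormsq : (a ^ ξ * Real.sqrt (2 * γ' * k₀)) ^ 2 ≤ ‖ℓ a ζ‖ ^ 2 := by
      have h3 : ‖ℓ a ζ‖ ^ 2 = (ℓ a ζ).re ^ 2 + (ℓ a ζ).im ^ 2 := by
        rw [Complex.sq_norm, Complex.normSq_apply]; ring
      rw [h3, mul_pow, Real.sq_sqrt h2γk]
      nlinarith [sq_nonneg (ℓ a ζ).re, h2]
    have hnorm : a ^ ξ * Real.sqrt (2 * γ' * k₀) ≤ ‖ℓ a ζ‖ := by
      have h := Real.sqrt_le_sqrt hnormsq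
      rwa [Real.sqrt_sq (mul_nonneg haξpos.le (Real.sqrt_nonneg _)),
        Real.sqrt_sq (norm_nonneg _)] at h
    have hsqrtpos : 0 < Real.sqrt (2 * γ' * k₀) :=
      Real.sqrt_pos.mpr (by nlinarith)
    calc a ^ ξ / ‖ℓ a ζ‖ ≤ a ^ ξ / (a ^ ξ * Real.sqrt (2 * γ' * k₀)) :=
        div_le_div_of_nonneg_left haξpos.le (mul_pos haξpos hsqrtpos) hnorm
      _ = 1 / Real.sqrt (2 * γ' * k₀) := by
        rw [div_mul_eq_div_div, div_self haξpos.ne']
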